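/- arXiv:2404.12434 — 2 statements merged into one kernel-verified Lean document; each statement's English description precedes it below -/
import Mathlib

section
/- Let n ≥ 1, N ≥ 1, let ψ : ℝ^n → ℂ be a C^N function with compact support, let k ∈ ℝ^n with k ≠ 0, and let ε > 0. Then |∫_{ℝ^n} ψ(v) · exp((2πi/ε)⟨k,v⟩) dv| ≤ (ε/(2π‖k‖))^N · μ(tsupport(Dψ)) · sup_{v ∈ ℝ^n} ‖D^N ψ(v)‖, where μ is Lebesgue measure, Dψ denotes the (Fréchet) derivative of ψ, tsupport(Dψ) is the closure of { v : Dψ(v) ≠ 0 }, and ‖D^N ψ(v)‖ is the operator norm of the N-th iterated derivative of ψ at v. -/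
open MeasureTheory Real FourierTransform RealInnerProductSpace

/-- Decay of oscillatory integrals: for a compactly supported `C^N` function `ψ : ℝⁿ → ℂ`,
a nonzero frequency `k` and `ε > 0`,
`|∫ ψ(v) e^{(2πi/ε)⟨k,v⟩} dv| ≤ (ε/(2π‖k‖))^N · μ(tsupport Dψ) · sup_v ‖D^N ψ(v)‖`. -/
theorem oscillatory_integral_decay {n : ℕ} (hn : 1 ≤ n) (N : ℕ) (hN : 1 ≤ N)
    (ψ : EuclideanSpace ℝ (Fin n) → ℂ) (hψ : ContDiff ℝ N ψ)
    (hsupp : HasCompactSupport ψ)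
    (k : EuclideanSpace ℝ (Fin n)) (hk : k ≠ 0) (ε : ℝ) (hε : 0 < ε) :
    ‖∫ v, ψ v * Complex.exp (2 * Real.pi * Complex.I / (ε : ℂ) * ((inner ℝ k v : ℝ) : ℂ))‖ ≤
      (ε / (2 * Real.pi * ‖k‖)) ^ N *
        (volume (tsupport (fderiv ℝ ψ))).toReal *
        ⨆ v : EuclideanSpace ℝ (Fin n), ‖iteratedFDeriv ℝ N ψ v‖ := by
  have hkn : (0:ℝ) < ‖k‖ := norm_pos_iff.2 hk
  have hπ : (0:ℝ) < Real.pi := Real.pi_pos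
  set w : EuclideanSpace ℝ (Fin n) := (-ε⁻¹) • k with hw
  -- Step 1 : the integral is the Fourier transform of ψ at w
  have hI : (∫ v, ψ v * Complex.exp (2 * Real.pi * Complex.I / (ε : ℂ) * ((inner ℝ k v : ℝ) : ℂ)))
      = 𝓕 ψ w := by
    rw [Real.fourier_eq']
    congr 1; ext v
    rw [smul_eq_mul, mul_comm]
    congr 1
    have hv : (inner ℝ v w : ℝ) = -(ε⁻¹ * (inner ℝ k v : ℝ)) := by
      rw [hw, real_inner_smul_right, real_inner_comm]; ring
    rw [hv]
    have hε' : (ε : ℂ) ≠ 0 := by exact_mod_cast hε.ne'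
    push_cast
    field_simp
  -- integrability of the derivatives
  have hint : ∀ (m : ℕ), (m : ℕ∞) ≤ (N : ℕ∞) → Integrable (iteratedFDeriv ℝ m ψ) volume :=
    fun m hm => (hψ.continuous_iteratedFDeriv
      (show (m : WithTop ℕ∞) ≤ (N : ℕ) by exact_mod_cast hm)).integrable_of_hasCompactSupport
      (hsupp.iteratedFDeriv m)
  -- Step 2 : key Fourier identity for iterated derivatives
  have key := Real.fourier_iteratedFDeriv (N := (N : ℕ∞)) hψ hint (le_refl (N : ℕ∞))
  have key' : 𝓕 (iteratedFDeriv ℝ N ψ) w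
      = VectorFourier.fourierPowSMulRight (-innerSL ℝ) (𝓕 ψ) w N := congrFun key w
  -- evaluate on (k, ..., k)
  have hwk : ((-innerSL ℝ (E := EuclideanSpace ℝ (Fin n))) w) k = ε⁻¹ * ‖k‖^2 := by
    simp only [ContinuousLinearMap.neg_apply, innerSL_apply_apply, hw, real_inner_smul_left,
      real_inner_self_eq_norm_sq]
    ring
  have e1 : (VectorFourier.fourierPowSMulRight (-innerSL ℝ) (𝓕 ψ) w N) (fun _ => k)
      = (-(2*(π:ℂ)*Complex.I))^N • ((ε⁻¹ * ‖k‖^2)^N : ℝ) • 𝓕 ψ w := by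
    rw [VectorFourier.fourierPowSMulRight_apply]
    congr 1
    rw [Finset.prod_congr rfl (fun i _ => hwk), Finset.prod_const, Finset.card_univ,
      Fintype.card_fin]
  have e1norm : ‖(VectorFourier.fourierPowSMulRight (-innerSL ℝ) (𝓕 ψ) w N) (fun _ => k)‖
      = (2*π)^N * (ε⁻¹ * ‖k‖^2)^N * ‖𝓕 ψ w‖ := by
    rw [e1, norm_smul, norm_smul]
    have h1 : ‖(-(2*(π:ℂ)*Complex.I))^N‖ = (2*π)^N := by
      rw [norm_pow, norm_neg]
      congr 1
      simp only [norm_mul, Complex.norm_I, mul_one, Complex.norm_ofNat, Complex.norm_real]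
      rw [Real.norm_eq_abs, abs_of_pos hπ]
    have h2 : ‖((ε⁻¹ * ‖k‖^2)^N : ℝ)‖ = (ε⁻¹ * ‖k‖^2)^N := by
      rw [Real.norm_eq_abs, abs_of_nonneg]
      positivity
    rw [h1, h2, mul_assoc]
  -- bound the left-hand side of the key identity
  have e2 : ‖𝓕 (iteratedFDeriv ℝ N ψ) w (fun _ => k)‖
      ≤ (∫ v, ‖iteratedFDeriv ℝ N ψ v‖) * ‖k‖^N := by
    calc ‖𝓕 (iteratedFDeriv ℝ N ψ) w (fun _ => k)‖
        ≤ ‖𝓕 (iteratedFDeriv ℝ N ψ) w‖ * ∏ _i : Fin N, ‖k‖ :=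
          ContinuousMultilinearMap.le_opNorm _ _
      _ ≤ (∫ v, ‖iteratedFDeriv ℝ N ψ v‖) * ‖k‖^N := by
          rw [Finset.prod_const, Finset.card_univ, Fintype.card_fin]
          exact mul_le_mul_of_nonneg_right
            (VectorFourier.norm_fourierIntegral_le_integral_norm _ _ _ _ _) (by positivity)
  have e3 : (2*π)^N * (ε⁻¹ * ‖k‖^2)^N * ‖𝓕 ψ w‖
      ≤ (∫ v, ‖iteratedFDeriv ℝ N ψ v‖) * ‖k‖^N := by
    rw [← e1norm, ← key']
    exact e2
  -- hence the main Fourier bound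
  have e4 : ‖𝓕 ψ w‖ ≤ (ε / (2 * π * ‖k‖)) ^ N * ∫ v, ‖iteratedFDeriv ℝ N ψ v‖ := by
    have hc : (0:ℝ) < (2*π)^N * (ε⁻¹ * ‖k‖^2)^N :=
      mul_pos (pow_pos (by positivity) N) (pow_pos (mul_pos (inv_pos.2 hε) (pow_pos hkn 2)) N)
    rw [← le_div_iff₀' hc] at e3
    refine e3.trans (le_of_eq ?_)
    have h1 : (ε:ℝ) ≠ 0 := hε.ne'
    have h2 : ‖k‖ ≠ 0 := hkn.ne'
    have h3 : π ≠ 0 := hπ.ne'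
    rw [div_pow]
    field_simp
    rw [div_pow, mul_assoc _ ((‖k‖ ^ 2) ^ N / ε ^ N), div_mul_cancel₀ _ (pow_ne_zero N h1)]
    ring
  -- Step 3 : bound the integral of the N-th derivative by the measure of the support times sup
  set s := tsupport (fderiv ℝ ψ) with hs
  have hs_closed : IsClosed s := isClosed_tsupport _
  have hs_sub : s ⊆ tsupport ψ := closure_minimal (support_fderiv_subset ℝ) (isClosed_tsupport ψ)
  have hs_cpt : IsCompact s := IsCompact.of_isClosed_subset hsupp hs_closed hs_sub
  have hμs : volume s < ⊤ := hs_cpt.measure_lt_top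
  have hvanish : ∀ x, x ∉ s → iteratedFDeriv ℝ N ψ x = 0 := by
    intro x hx
    obtain ⟨m, rfl⟩ : ∃ m, N = m + 1 := ⟨N - 1, (Nat.succ_pred_eq_of_pos hN).symm⟩
    rw [iteratedFDeriv_succ_eq_comp_right]
    have hU : IsOpen sᶜ := hs_closed.isOpen_compl
    have heq : Set.EqOn (fun y => fderiv ℝ ψ y) (fun _ => 0) sᶜ := fun y hy =>
      image_eq_zero_of_notMem_tsupport hy
    have h0 : iteratedFDeriv ℝ m (fun y => fderiv ℝ ψ y) x = 0 := by
      calc iteratedFDeriv ℝ m (fun y => fderiv ℝ ψ y) x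
          = iteratedFDerivWithin ℝ m (fun y => fderiv ℝ ψ y) sᶜ x :=
            ((iteratedFDerivWithin_of_isOpen m hU) hx).symm
        _ = iteratedFDerivWithin ℝ m (fun _ => 0) sᶜ x := heq.iteratedFDerivWithin m hx
        _ = iteratedFDeriv ℝ m (fun _ => 0) x := (iteratedFDerivWithin_of_isOpen m hU) hx
        _ = 0 := by rw [iteratedFDeriv_zero_fun]; rfl
    rw [Function.comp_apply, h0]
    exact (continuousMultilinearCurryRightEquiv' ℝ m (EuclideanSpace ℝ (Fin n)) ℂ).symm.map_zero
  have hbdd : BddAbove (Set.range fun v => ‖iteratedFDeriv ℝ N ψ v‖) :=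
    ((hψ.continuous_iteratedFDeriv (le_refl ((N:ℕ) : WithTop ℕ∞))).norm).bddAbove_range_of_hasCompactSupport
      (hsupp.iteratedFDeriv N).norm
  set C := ⨆ v : EuclideanSpace ℝ (Fin n), ‖iteratedFDeriv ℝ N ψ v‖ with hC
  have hC0 : 0 ≤ C := le_trans (norm_nonneg _) (le_ciSup hbdd 0)
  have e5 : (∫ v, ‖iteratedFDeriv ℝ N ψ v‖) ≤ (volume s).toReal * C := by
    have heq : (∫ v, ‖iteratedFDeriv ℝ N ψ v‖)
        = ∫ v in s, ‖iteratedFDeriv ℝ N ψ v‖ :=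
      (setIntegral_eq_integral_of_forall_compl_eq_zero
        (fun x hx => by rw [hvanish x hx, norm_zero])).symm
    rw [heq]
    have := norm_setIntegral_le_of_norm_le_const (μ := volume) (s := s)
      (f := fun v => ‖iteratedFDeriv ℝ N ψ v‖) (C := C) hμs
      (fun x _ => by
        simpa using le_ciSup hbdd x)
    calc (∫ v in s, ‖iteratedFDeriv ℝ N ψ v‖) ≤ ‖∫ v in s, ‖iteratedFDeriv ℝ N ψ v‖‖ :=
          le_abs_self _
      _ ≤ C * (volume s).toReal := this
      _ = (volume s).toReal * C := mul_comm _ _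
  -- conclusion
  rw [hI]
  calc ‖𝓕 ψ w‖ ≤ (ε / (2 * π * ‖k‖)) ^ N * ∫ v, ‖iteratedFDeriv ℝ N ψ v‖ := e4
    _ ≤ (ε / (2 * π * ‖k‖)) ^ N * ((volume s).toReal * C) := by
        gcongr
    _ = (ε / (2 * π * ‖k‖)) ^ N * (volume s).toReal * C := by ring
end

section
/- Let f : ℝ^n → ℝ be ℤ^n-periodic (f(x+m) = f(x) for all x ∈ ℝ^n and m ∈ ℤ^n) and integrable on the unit cube [0,1]^n, and let U ⊆ ℝ^n be an open set. Then for every ε > 0, ∫_U |f(x/ε)| dx ≤ (∫_{[0,1]^n} |f(y)| dy) · μ(U_{√n·ε}), where μ is Lebesgue measure and U_r = { y ∈ ℝ^n : dist(y,U) ≤ r } is the closed r-neighborhood of U. -/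
open MeasureTheory Pointwise

/-- The closed unit cube `[0,1]ⁿ` in Euclidean space. -/
def unitCube (n : ℕ) : Set (EuclideanSpace ℝ (Fin n)) :=
  {y | ∀ i, y i ∈ Set.Icc (0 : ℝ) 1}

/-- Half-open integer cube. -/
def icube {n : ℕ} (m : Fin n → ℤ) : Set (EuclideanSpace ℝ (Fin n)) :=
  {y | ∀ i, y i ∈ Set.Ico (m i : ℝ) (m i + 1)}

lemma icube_eq_preimage {n : ℕ} (m : Fin n → ℤ) :
    icube m = ((MeasurableEquiv.toLp 2 (Fin n → ℝ)).symm) ⁻¹'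
      (Set.univ.pi fun i => Set.Ico (m i : ℝ) (m i + 1)) := by
  ext y
  simp [icube, Set.mem_pi]

lemma measurableSet_icube {n : ℕ} (m : Fin n → ℤ) : MeasurableSet (icube m) := by
  rw [icube_eq_preimage]
  exact ((MeasurableEquiv.toLp 2 (Fin n → ℝ)).symm).measurable
    (MeasurableSet.univ_pi fun i => measurableSet_Ico)

lemma volume_icube {n : ℕ} (m : Fin n → ℤ) : volume (icube m) = 1 := by
  rw [icube_eq_preimage,
    (EuclideanSpace.volume_preserving_symm_measurableEquiv_toLp (Fin n)).measure_preimage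
      (MeasurableSet.univ_pi fun i => measurableSet_Ico).nullMeasurableSet]
  rw [volume_pi_pi]
  simp

lemma icube_disjoint {n : ℕ} {m m' : Fin n → ℤ} (h : m ≠ m') :
    Disjoint (icube m) (icube m') := by
  rw [Set.disjoint_left]
  intro y hy hy'
  apply h
  funext i
  have h1 := hy i
  have h2 := hy' i
  simp only [Set.mem_Ico] at h1 h2
  have e1 : ⌊y i⌋ = m i := by
    rw [Int.floor_eq_iff]; exact ⟨h1.1, h1.2⟩
  have e2 : ⌊y i⌋ = m' i := by
    rw [Int.floor_eq_iff]; exact ⟨h2.1, h2.2⟩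
  rw [← e1, e2]

lemma exists_icube {n : ℕ} (y : EuclideanSpace ℝ (Fin n)) : ∃ m, y ∈ icube m := by
  refine ⟨fun i => ⌊y i⌋, fun i => ?_⟩
  exact ⟨Int.floor_le _, Int.lt_floor_add_one _⟩

lemma norm_sub_le_of_mem_icube {n : ℕ} {m : Fin n → ℤ}
    {y z : EuclideanSpace ℝ (Fin n)} (hy : y ∈ icube m) (hz : z ∈ icube m) :
    ‖z - y‖ ≤ Real.sqrt n := by
  rw [EuclideanSpace.norm_eq]
  apply Real.sqrt_le_sqrt
  calc ∑ i, ‖(z - y) i‖ ^ 2 ≤ ∑ _i : Fin n, (1 : ℝ) := by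
        apply Finset.sum_le_sum
        intro i _
        have h1 := hy i
        have h2 := hz i
        simp only [Set.mem_Ico] at h1 h2
        have hle : ‖(z - y) i‖ ≤ 1 := by
          have : (z - y) i = z i - y i := rfl
          rw [this, Real.norm_eq_abs, abs_le]
          constructor <;> nlinarith
        nlinarith [norm_nonneg ((z - y) i)]
    _ = n := by simp

/-- For a `ℤⁿ`-periodic function `f` integrable on the unit cube and an open set `U`,
`∫_U |f(x/ε)| dx ≤ (∫_{[0,1]ⁿ} |f|) · μ(U_{√n·ε})`, where `U_r` is the closed
`r`-neighborhood of `U`. -/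
theorem periodic_oscillating_integral_bound {n : ℕ}
    (f : EuclideanSpace ℝ (Fin n) → ℝ)
    (hper : ∀ (x : EuclideanSpace ℝ (Fin n)) (m : Fin n → ℤ),
      f (x + (EuclideanSpace.equiv (Fin n) ℝ).symm (fun i => (m i : ℝ))) = f x)
    (hint : IntegrableOn f (unitCube n))
    (U : Set (EuclideanSpace ℝ (Fin n))) (hU : IsOpen U) (ε : ℝ) (hε : 0 < ε) :
    ∫⁻ x in U, ENNReal.ofReal |f (ε⁻¹ • x)| ≤
      (∫⁻ y in unitCube n, ENNReal.ofReal |f y|) *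
        volume (Metric.cthickening (Real.sqrt n * ε) U) := by
  classical
  set g : EuclideanSpace ℝ (Fin n) → ENNReal := fun x => ENNReal.ofReal |f x| with hg
  set J := ∫⁻ y in unitCube n, g y with hJ
  set V : Set (EuclideanSpace ℝ (Fin n)) := (ε • ·) ⁻¹' U with hV
  have hVmeas : MeasurableSet V := (hU.preimage (continuous_const_smul ε)).measurableSet
  -- translation invariance over integer cubes
  have htrans : ∀ m : Fin n → ℤ, ∫⁻ x in icube m, g x = ∫⁻ x in icube (0 : Fin n → ℤ), g x := by
    intro m
    set c : EuclideanSpace ℝ (Fin n) := (EuclideanSpace.equiv (Fin n) ℝ).symm (fun i => (m i : ℝ)) with hc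
    have hcoord : ∀ i, c i = (m i : ℝ) := fun i => rfl
    rw [← lintegral_indicator (measurableSet_icube m) _,
        ← lintegral_indicator (measurableSet_icube 0) _,
        ← lintegral_add_right_eq_self (fun x => (icube m).indicator g x) c]
    congr 1
    funext x
    have hadd : ∀ i, (x + c) i = x i + (m i : ℝ) := fun i => rfl
    have hmem : x + c ∈ icube m ↔ x ∈ icube (0 : Fin n → ℤ) := by
      constructor
      · intro h i
        have := h i
        rw [hadd i] at this
        simp only [Set.mem_Ico, Pi.zero_apply, Int.cast_zero] at this ⊢
        constructor <;> linarith [this.1, this.2]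
      · intro h i
        have := h i
        simp only [Set.mem_Ico, Int.cast_zero, Pi.zero_apply] at this
        rw [Set.mem_Ico, hadd i]
        push_cast
        constructor <;> [linarith [this.1]; linarith [this.2]]
    by_cases hx : x ∈ icube (0 : Fin n → ℤ)
    · rw [Set.indicator_of_mem (hmem.2 hx), Set.indicator_of_mem hx, hg]
      simp only
      rw [hc, hper x m]
    · rw [Set.indicator_of_notMem (fun h => hx (hmem.1 h)), Set.indicator_of_notMem hx]
  have hcube_le : ∀ m : Fin n → ℤ, ∫⁻ x in icube m, g x ≤ J := by
    intro m
    rw [htrans m]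
    apply lintegral_mono_set
    intro x hx i
    have := hx i
    simp only [Set.mem_Ico, Int.cast_zero, Pi.zero_apply] at this
    exact ⟨this.1, le_of_lt (by linarith [this.2])⟩
  -- scaling
  have hεn : (0 : ℝ) < ε ^ n := pow_pos hε n
  have hscale : ∫⁻ x in U, g (ε⁻¹ • x) = ENNReal.ofReal (ε ^ n) * ∫⁻ y in V, g y := by
    have hmap : Measure.map (ε • · : EuclideanSpace ℝ (Fin n) → EuclideanSpace ℝ (Fin n)) volume
        = ENNReal.ofReal |(ε ^ Module.finrank ℝ (EuclideanSpace ℝ (Fin n)))⁻¹| • volume := by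
      exact Measure.map_addHaar_smul volume hε.ne'
    rw [finrank_euclideanSpace_fin] at hmap
    set h : EuclideanSpace ℝ (Fin n) → ENNReal := fun x => Set.indicator U (fun x => g (ε⁻¹ • x)) x with hh
    have e : EuclideanSpace ℝ (Fin n) ≃ᵐ EuclideanSpace ℝ (Fin n) := (Homeomorph.smul (isUnit_iff_ne_zero.2 hε.ne').unit).toMeasurableEquiv
    have key : ∫⁻ y, h (ε • y) = ENNReal.ofReal |(ε ^ n)⁻¹| * ∫⁻ x, h x := by
      have hfun : (⇑(Homeomorph.smul (isUnit_iff_ne_zero.2 hε.ne').unit).toMeasurableEquiv :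
          EuclideanSpace ℝ (Fin n) → EuclideanSpace ℝ (Fin n)) = (fun x => ε • x) := rfl
      have := lintegral_map_equiv (μ := (volume : Measure (EuclideanSpace ℝ (Fin n)))) h
        (Homeomorph.smul (isUnit_iff_ne_zero.2 hε.ne').unit).toMeasurableEquiv
      simp only [hfun] at this
      rw [hmap, lintegral_smul_measure] at this
      exact this.symm
    have hindic : ∀ y : EuclideanSpace ℝ (Fin n), h (ε • y) = Set.indicator V g y := by
      intro y
      by_cases hy : y ∈ V
      · have hyU : ε • y ∈ U := hy
        rw [Set.indicator_of_mem hy]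
        show U.indicator (fun x => g (ε⁻¹ • x)) (ε • y) = g y
        rw [Set.indicator_of_mem hyU]
        have hyy : ε⁻¹ • ε • y = y := by rw [smul_smul, inv_mul_cancel₀ hε.ne', one_smul]
        simp only [hyy]
      · have hyU : ε • y ∉ U := hy
        rw [Set.indicator_of_notMem hy]
        show U.indicator (fun x => g (ε⁻¹ • x)) (ε • y) = 0
        rw [Set.indicator_of_notMem hyU]
    calc ∫⁻ x in U, g (ε⁻¹ • x) = ∫⁻ x, h x := (lintegral_indicator hU.measurableSet _).symm
      _ = ENNReal.ofReal (ε ^ n) * (ENNReal.ofReal |(ε ^ n)⁻¹| * ∫⁻ x, h x) := by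
          rw [← mul_assoc, ← ENNReal.ofReal_mul hεn.le]
          rw [abs_of_pos (inv_pos.2 hεn), mul_inv_cancel₀ hεn.ne']
          simp
      _ = ENNReal.ofReal (ε ^ n) * ∫⁻ y, h (ε • y) := by rw [key]
      _ = ENNReal.ofReal (ε ^ n) * ∫⁻ y in V, g y := by
          rw [← lintegral_indicator hVmeas _]
          congr 1
          exact lintegral_congr hindic
  -- the set of relevant cubes
  set S : Set (Fin n → ℤ) := {m | (V ∩ icube m).Nonempty} with hS
  -- each scaled cube for m ∈ S is inside the thickening
  have hsub : ∀ m ∈ S, (ε • ·) '' icube m ⊆ Metric.cthickening (Real.sqrt n * ε) U := by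
    rintro m hm - ⟨z, hz, rfl⟩
    obtain ⟨y, hyV, hy⟩ := hm
    refine Metric.mem_cthickening_of_dist_le (ε • z) (ε • y) _ _ hyV ?_
    rw [dist_smul₀]
    have : dist z y ≤ Real.sqrt n := by
      rw [dist_eq_norm]
      exact norm_sub_le_of_mem_icube hy hz
    calc |ε| * dist z y ≤ |ε| * Real.sqrt n := by
          exact mul_le_mul_of_nonneg_left this (abs_nonneg ε)
      _ = Real.sqrt n * ε := by rw [abs_of_pos hε, mul_comm]
  have himg_meas : ∀ m : Fin n → ℤ, MeasurableSet ((ε • ·) '' icube m) := by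
    intro m
    have : (ε • ·) '' icube m = (ε⁻¹ • · : EuclideanSpace ℝ (Fin n) → EuclideanSpace ℝ (Fin n)) ⁻¹' icube m := by
      ext x
      simp only [Set.mem_image, Set.mem_preimage]
      constructor
      · rintro ⟨z, hz, rfl⟩
        have : ε⁻¹ • ε • z = z := by rw [smul_smul, inv_mul_cancel₀ hε.ne', one_smul]
        rwa [this]
      · intro hx
        exact ⟨ε⁻¹ • x, hx, by rw [smul_smul, mul_inv_cancel₀ hε.ne', one_smul]⟩
    rw [this]
    exact measurableSet_icube m |>.preimage (measurable_const_smul _)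
  have himg_vol : ∀ m : Fin n → ℤ, volume ((ε • ·) '' icube m) = ENNReal.ofReal (ε ^ n) := by
    intro m
    have : (ε • ·) '' icube m = ε • icube m := rfl
    rw [this, Measure.addHaar_smul_of_nonneg volume hε.le, finrank_euclideanSpace_fin,
      volume_icube, mul_one]
  -- count the cubes
  have hcount : ∑' (_ : S), ENNReal.ofReal (ε ^ n)
      ≤ volume (Metric.cthickening (Real.sqrt n * ε) U) := by
    have hdisj : Pairwise (Function.onFun Disjoint fun m : S => (ε • ·) '' icube (m : Fin n → ℤ)) := by
      intro a b hab
      have hne : (a : Fin n → ℤ) ≠ b := fun h => hab (Subtype.ext h)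
      have := icube_disjoint hne
      exact this.image (u := Set.univ)
        (Set.injOn_of_injective (smul_right_injective (EuclideanSpace ℝ (Fin n)) hε.ne'))
        (Set.subset_univ _) (Set.subset_univ _)
    calc ∑' (m : S), ENNReal.ofReal (ε ^ n)
        = ∑' (m : S), volume ((ε • ·) '' icube (m : Fin n → ℤ)) := by
          congr 1; funext m; rw [himg_vol]
      _ = volume (⋃ m : S, (ε • ·) '' icube (m : Fin n → ℤ)) :=
          (measure_iUnion hdisj fun m => himg_meas _).symm
      _ ≤ volume (Metric.cthickening (Real.sqrt n * ε) U) := by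
          apply measure_mono
          exact Set.iUnion_subset fun m => hsub m m.2
  -- putting it together
  rw [hscale]
  have hVcover : ∫⁻ y in V, g y ≤ ∑' m : Fin n → ℤ, ∫⁻ y in V ∩ icube m, g y := by
    have : V ⊆ ⋃ m : Fin n → ℤ, (V ∩ icube m) := by
      intro y hy
      obtain ⟨m, hm⟩ := exists_icube y
      exact Set.mem_iUnion.2 ⟨m, hy, hm⟩
    calc ∫⁻ y in V, g y ≤ ∫⁻ y in ⋃ m : Fin n → ℤ, (V ∩ icube m), g y :=
          lintegral_mono_set this
      _ ≤ ∑' m : Fin n → ℤ, ∫⁻ y in V ∩ icube m, g y := lintegral_iUnion_le _ _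
  have hterm : ∀ m : Fin n → ℤ, ∫⁻ y in V ∩ icube m, g y ≤ S.indicator (fun _ => J) m := by
    intro m
    by_cases hm : m ∈ S
    · rw [Set.indicator_of_mem hm]
      exact le_trans (lintegral_mono_set Set.inter_subset_right) (hcube_le m)
    · rw [Set.indicator_of_notMem hm]
      have : V ∩ icube m = ∅ := Set.not_nonempty_iff_eq_empty.1 hm
      rw [this]
      simp
  calc ENNReal.ofReal (ε ^ n) * ∫⁻ y in V, g y
      ≤ ENNReal.ofReal (ε ^ n) * ∑' m : Fin n → ℤ, ∫⁻ y in V ∩ icube m, g y :=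
        mul_le_mul_right hVcover _
    _ ≤ ENNReal.ofReal (ε ^ n) * ∑' m : Fin n → ℤ, S.indicator (fun _ => J) m :=
        mul_le_mul_right (ENNReal.tsum_le_tsum hterm) _
    _ = ENNReal.ofReal (ε ^ n) * ∑' (m : S), J := by rw [tsum_subtype S (fun _ => J)]
    _ = J * ∑' (_ : S), ENNReal.ofReal (ε ^ n) := by
        rw [← ENNReal.tsum_mul_left, ← ENNReal.tsum_mul_left]
        exact tsum_congr fun _ => mul_comm _ _
    _ ≤ J * volume (Metric.cthickening (Real.sqrt n * ε) U) :=
        mul_le_mul_right hcount _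
end
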